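/- (Detecting label shift) Assume the label shift assumption (A.1), p(y) > 0 for all y (A.2), and that the confusion matrix C is invertible (A.3). Then the label marginals agree, q(y) = p(y) for all y, if and only if the prediction marginals agree, i.e., P(f⁻¹(i) × {1,…,k}) = Q(f⁻¹(i) × {1,…,k}) for all labels i. -/

import Mathlib

open MeasureTheory ProbabilityTheory Filter Matrix

noncomputable section

lemma prod_univ_decomp {X : Type*} [MeasurableSpace X] {k : ℕ}
    (μ : Measure (X × Fin k)) {S : Set X} (hS : MeasurableSet S) :
    μ (S ×ˢ (Set.univ : Set (Fin k))) = ∑ y : Fin k, μ (S ×ˢ ({y} : Set (Fin k))) := by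
  have hset : S ×ˢ (Set.univ : Set (Fin k)) = ⋃ y : Fin k, S ×ˢ ({y} : Set (Fin k)) := by
    ext ⟨x, y⟩
    simp only [Set.mem_prod, Set.mem_univ, and_true, Set.mem_iUnion, Set.mem_singleton_iff]
    exact ⟨fun hx => ⟨y, hx, rfl⟩, fun ⟨i, hx, _⟩ => hx⟩
  rw [hset, measure_iUnion, tsum_fintype]
  · intro i j hij
    refine Set.disjoint_left.mpr ?_
    rintro ⟨x, y⟩ ⟨_, hy1⟩ ⟨_, hy2⟩
    simp only [Set.mem_singleton_iff] at hy1 hy2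
    exact hij (hy1 ▸ hy2 ▸ rfl)
  · exact fun y => hS.prod (measurableSet_singleton y)

/-- Population confusion matrix: `C i j = P (f⁻¹(i) × {j})`. -/
def confusion {X : Type*} [MeasurableSpace X] {k : ℕ}
    (P : Measure (X × Fin k)) (f : X → Fin k) : Matrix (Fin k) (Fin k) ℝ :=
  fun i j => (P ((f ⁻¹' {i}) ×ˢ ({j} : Set (Fin k)))).toReal

/-- Detecting label shift. Under label shift, positivity, and an invertible
confusion matrix, the label marginals of `P` and `Q` agree iff the prediction marginals
agree. -/
theorem label_shift_detection
    {X : Type*} [MeasurableSpace X] {k : ℕ} (hk : 1 ≤ k)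
    (P Q : Measure (X × Fin k)) [IsProbabilityMeasure P] [IsProbabilityMeasure Q]
    (f : X → Fin k) (hf : Measurable f)
    (A1 : ∀ (y : Fin k) (A : Set X), MeasurableSet A →
      P (A ×ˢ ({y} : Set (Fin k))) * Q (Set.univ ×ˢ ({y} : Set (Fin k)))
        = Q (A ×ˢ ({y} : Set (Fin k))) * P (Set.univ ×ˢ ({y} : Set (Fin k))))
    (A2 : ∀ y : Fin k, 0 < (P (Set.univ ×ˢ ({y} : Set (Fin k)))).toReal)
    (A3 : IsUnit (confusion P f).det) :
    (∀ y : Fin k, Q (Set.univ ×ˢ ({y} : Set (Fin k))) = P (Set.univ ×ˢ ({y} : Set (Fin k))))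
      ↔ ∀ i : Fin k, P ((f ⁻¹' {i}) ×ˢ (Set.univ : Set (Fin k)))
          = Q ((f ⁻¹' {i}) ×ˢ (Set.univ : Set (Fin k))) := by
  have hPfin := fun s => measure_ne_top P s
  have hQfin := fun s => measure_ne_top Q s
  have hfmeas : ∀ i : Fin k, MeasurableSet (f ⁻¹' {i}) :=
    fun i => hf (measurableSet_singleton i)
  constructor
  · intro h i
    have key : ∀ y : Fin k, P ((f ⁻¹' {i}) ×ˢ ({y} : Set (Fin k)))
        = Q ((f ⁻¹' {i}) ×ˢ ({y} : Set (Fin k))) := by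
      intro y
      have h1 := A1 y (f ⁻¹' {i}) (hfmeas i)
      rw [h y] at h1
      have hp0 : P (Set.univ ×ˢ ({y} : Set (Fin k))) ≠ 0 := by
        intro h0
        have h2 := A2 y
        rw [h0] at h2
        simp at h2
      exact (ENNReal.mul_left_inj hp0 (hPfin _)).mp h1
    rw [prod_univ_decomp P (hfmeas i), prod_univ_decomp Q (hfmeas i)]
    exact Finset.sum_congr rfl fun y _ => key y
  · intro h
    set w : Fin k → ℝ := fun y =>
      (Q (Set.univ ×ˢ ({y} : Set (Fin k)))).toReal
        / (P (Set.univ ×ˢ ({y} : Set (Fin k)))).toReal with hw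
    -- real version of A1
    have hreal : ∀ (y : Fin k) (A : Set X), MeasurableSet A →
        (Q (A ×ˢ ({y} : Set (Fin k)))).toReal
          = (P (A ×ˢ ({y} : Set (Fin k)))).toReal * w y := by
      intro y A hA
      have h1 := congrArg ENNReal.toReal (A1 y A hA)
      rw [ENNReal.toReal_mul, ENNReal.toReal_mul] at h1
      have hp := A2 y
      rw [hw]
      simp only []
      rw [eq_comm, mul_comm, div_mul_eq_mul_div, div_eq_iff hp.ne']
      linarith
    have hC : (confusion P f).mulVec w = (confusion P f).mulVec (fun _ => 1) := by
      funext i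
      simp only [Matrix.mulVec, dotProduct, confusion, mul_one]
      have h1 : (P ((f ⁻¹' {i}) ×ˢ (Set.univ : Set (Fin k)))).toReal
          = ∑ y : Fin k, (P ((f ⁻¹' {i}) ×ˢ ({y} : Set (Fin k)))).toReal := by
        rw [prod_univ_decomp P (hfmeas i), ENNReal.toReal_sum]
        exact fun y _ => hPfin _
      have h2 : (Q ((f ⁻¹' {i}) ×ˢ (Set.univ : Set (Fin k)))).toReal
          = ∑ y : Fin k, (Q ((f ⁻¹' {i}) ×ˢ ({y} : Set (Fin k)))).toReal := by
        rw [prod_univ_decomp Q (hfmeas i), ENNReal.toReal_sum]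
        exact fun y _ => hQfin _
      have h3 : ∑ y : Fin k, (Q ((f ⁻¹' {i}) ×ˢ ({y} : Set (Fin k)))).toReal
          = ∑ y : Fin k, (P ((f ⁻¹' {i}) ×ˢ ({y} : Set (Fin k)))).toReal * w y :=
        Finset.sum_congr rfl fun y _ => hreal y _ (hfmeas i)
      rw [← h3, ← h2, ← h i, h1]
    have hinj : Function.Injective (confusion P f).mulVec :=
      Matrix.mulVec_injective_iff_isUnit.mpr
        ((Matrix.isUnit_iff_isUnit_det _).mpr A3)
    have hw1 : w = fun _ => (1 : ℝ) := hinj hC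
    intro y
    have := congrFun hw1 y
    simp only [hw] at this
    have hp := A2 y
    have heq : (Q (Set.univ ×ˢ ({y} : Set (Fin k)))).toReal
        = (P (Set.univ ×ˢ ({y} : Set (Fin k)))).toReal :=
      (div_eq_one_iff_eq hp.ne').mp this
    exact (ENNReal.toReal_eq_toReal_iff' (hQfin _) (hPfin _)).mp heq

end
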